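/- Under assumptions (A.1) and (A.2), for any fixed w in the Euclidean ball B(R), any t > 0, and i.i.d. samples Z₁,…,Z_n ∼ P, the empirical gradient concentrates: P[‖(1/n)·Σᵢ ∇f(w,Zᵢ) − ∇F(w)‖ ≥ t] ≤ 6^d · exp(−n·t²/(8σ₁²)), where σ₁ = B + MR. -/

import Mathlib

open MeasureTheory Metric Real ENNReal

/-- Core calculus inequality for Hoeffding's lemma. -/
lemma hoeffding_core {p h : ℝ} (hp0 : 0 ≤ p) (hp1 : p ≤ 1) (hh : 0 ≤ h) :
    Real.exp (-(p*h)) * (1 - p + p * Real.exp h) ≤ Real.exp (h^2/8) := by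
  have hD : ∀ x : ℝ, 0 < 1 - p + p * Real.exp x := by
    intro x
    rcases eq_or_lt_of_le hp0 with h0 | h0
    · simp [← h0]
    · have := Real.exp_pos x
      nlinarith
  set Φ : ℝ → ℝ := fun x => x/4 + p - p * Real.exp x / (1 - p + p * Real.exp x) with hΦdef
  have hΦderiv : ∀ x : ℝ, HasDerivAt Φ
      (1/4 - p * Real.exp x * (1 - p) / (1 - p + p * Real.exp x)^2) x := by
    intro x
    have h1 : HasDerivAt (fun x : ℝ => x/4 + p) (1/4) x := by
      simpa using ((hasDerivAt_id x).div_const 4).add_const p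
    have hnum : HasDerivAt (fun x : ℝ => p * Real.exp x) (p * Real.exp x) x :=
      (Real.hasDerivAt_exp x).const_mul p
    have hden : HasDerivAt (fun x : ℝ => 1 - p + p * Real.exp x) (p * Real.exp x) x := by
      simpa using hnum.const_add (1 - p)
    have h2 := hnum.div hden (hD x).ne'
    have := h1.sub h2
    refine this.congr_deriv ?_
    have := (hD x).ne'
    congr 1; congr 1; ring
  have hΦmono : Monotone Φ := by
    apply monotone_of_deriv_nonneg
    · intro x; exact (hΦderiv x).differentiableAt
    · intro x
      rw [(hΦderiv x).deriv]
      have h4 : 4 * (p * Real.exp x * (1 - p)) ≤ (1 - p + p * Real.exp x)^2 := by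
        nlinarith [sq_nonneg (1 - p - p * Real.exp x)]
      have hsq : (0:ℝ) < (1 - p + p * Real.exp x)^2 := pow_pos (hD x) 2
      rw [sub_nonneg, div_le_iff₀ hsq]
      linarith
  have hΦ0 : Φ 0 = 0 := by simp [hΦdef]
  have hΦnonneg : ∀ x, 0 ≤ x → 0 ≤ Φ x := fun x hx => hΦ0 ▸ hΦmono hx
  set G : ℝ → ℝ := fun x => x^2/8 - (-(p*x) + Real.log (1 - p + p * Real.exp x)) with hGdef
  have hGderiv : ∀ x : ℝ, HasDerivAt G (Φ x) x := by
    intro x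
    have hden : HasDerivAt (fun x : ℝ => 1 - p + p * Real.exp x) (p * Real.exp x) x := by
      simpa using ((Real.hasDerivAt_exp x).const_mul p).const_add (1 - p)
    have hlog := hden.log (hD x).ne'
    have hsq : HasDerivAt (fun x : ℝ => x^2/8) (x/4) x := by
      have := ((hasDerivAt_pow 2 x).div_const 8)
      exact this.congr_deriv (by ring)
    have hlin : HasDerivAt (fun x : ℝ => -(p*x)) (-p) x := by
      have h := ((hasDerivAt_id x).const_mul p).neg; rwa [mul_one] at h
    have := hsq.sub (hlin.add hlog)
    exact this.congr_deriv (by simp only [hΦdef]; ring)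
  have hGmono : MonotoneOn G (Set.Ici 0) := by
    apply monotoneOn_of_deriv_nonneg (convex_Ici 0)
    · exact fun x _ => (hGderiv x).differentiableAt.continuousAt.continuousWithinAt
    · intro x hx
      exact (hGderiv x).differentiableAt.differentiableWithinAt
    · intro x hx
      rw [(hGderiv x).deriv]
      exact hΦnonneg x (le_of_lt (by simpa using hx))
  have hG0 : G 0 = 0 := by simp [hGdef]
  have hGh : 0 ≤ G h := hG0 ▸ hGmono Set.self_mem_Ici hh hh
  have hkey : -(p*h) + Real.log (1 - p + p * Real.exp h) ≤ h^2/8 := by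
    simp only [hGdef] at hGh; linarith
  calc Real.exp (-(p*h)) * (1 - p + p * Real.exp h)
      = Real.exp (-(p*h) + Real.log (1 - p + p * Real.exp h)) := by
        rw [Real.exp_add, Real.exp_log (hD h)]
    _ ≤ Real.exp (h^2/8) := Real.exp_le_exp.2 hkey

/-- Hoeffding's lemma: mgf bound for a mean-zero bounded random variable. -/
lemma hoeffding_mgf {Ω : Type*} [MeasurableSpace Ω] (μ : Measure Ω) [IsProbabilityMeasure μ]
    {X : Ω → ℝ} (hX : Measurable X) {a b : ℝ} (hab : ∀ ω, X ω ∈ Set.Icc a b)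
    (hmean : ∫ ω, X ω ∂μ = 0) {l : ℝ} (hl : 0 ≤ l) :
    ∫ ω, Real.exp (l * X ω) ∂μ ≤ Real.exp (l^2 * (b-a)^2 / 8) := by
  have hXint : Integrable X μ := by
    refine ⟨hX.aestronglyMeasurable, ?_⟩
    apply MeasureTheory.HasFiniteIntegral.of_bounded (C := max |a| |b|)
    filter_upwards with ω
    rcases hab ω with ⟨h1, h2⟩
    rw [Real.norm_eq_abs, abs_le]
    constructor
    · exact le_trans (neg_le_neg (le_max_left _ _)) (le_trans (neg_abs_le a) h1)
    · exact le_trans h2 (le_trans (le_abs_self b) (le_max_right _ _))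
  have ha0 : a ≤ 0 := by
    have : ∫ ω, X ω ∂μ ≤ ∫ _ω, b ∂μ := integral_mono hXint (integrable_const b)
      (fun ω => (hab ω).2)
    have h2 : ∫ _ω, a ∂μ ≤ ∫ ω, X ω ∂μ := integral_mono (integrable_const a) hXint
      (fun ω => (hab ω).1)
    simp [hmean] at h2
    exact h2
  have hb0 : 0 ≤ b := by
    have : ∫ ω, X ω ∂μ ≤ ∫ _ω, b ∂μ := integral_mono hXint (integrable_const b)
      (fun ω => (hab ω).2)
    simp [hmean] at this
    exact this
  rcases eq_or_lt_of_le (ha0.trans hb0) with heq | hlt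
  · -- a = b = 0, so X = 0
    have ha : a = 0 := le_antisymm ha0 (by rw [heq]; exact hb0)
    have hbz : b = 0 := by rw [← heq, ha]
    have hX0 : ∀ ω, X ω = 0 := fun ω => le_antisymm ((hab ω).2.trans hbz.le) (ha ▸ (hab ω).1)
    simp [hX0, ha, hbz]
  · -- a < b
    set p : ℝ := -a / (b - a) with hp
    have hba : 0 < b - a := sub_pos.2 hlt
    have hp0 : 0 ≤ p := div_nonneg (neg_nonneg.2 ha0) hba.le
    have hp1 : p ≤ 1 := by
      rw [div_le_one hba]; linarith
    -- pointwise convexity bound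
    have hpt : ∀ ω, Real.exp (l * X ω) ≤
        (b - X ω)/(b-a) * Real.exp (l*a) + (X ω - a)/(b-a) * Real.exp (l*b) := by
      intro ω
      rcases hab ω with ⟨h1, h2⟩
      have hw1 : (0:ℝ) ≤ (b - X ω)/(b-a) := div_nonneg (by linarith) hba.le
      have hw2 : (0:ℝ) ≤ (X ω - a)/(b-a) := div_nonneg (by linarith) hba.le
      have hsum : (b - X ω)/(b-a) + (X ω - a)/(b-a) = 1 := by
        field_simp
        ring
      have := convexOn_exp.2 (Set.mem_univ (l*a)) (Set.mem_univ (l*b)) hw1 hw2 hsum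
      simp only [smul_eq_mul] at this
      rw [show (b - X ω)/(b-a) * (l*a) + (X ω - a)/(b-a) * (l*b) = l * X ω from by
        field_simp; ring] at this
      exact this
    -- integrate
    have hint_exp : Integrable (fun ω => Real.exp (l * X ω)) μ := by
      refine ⟨(Real.continuous_exp.measurable.comp (hX.const_mul l)).aestronglyMeasurable, ?_⟩
      apply MeasureTheory.HasFiniteIntegral.of_bounded (C := Real.exp (l * b))
      filter_upwards with ω
      rw [Real.norm_eq_abs, abs_of_pos (Real.exp_pos _)]
      exact Real.exp_le_exp.2 (mul_le_mul_of_nonneg_left (hab ω).2 hl)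
    have hrhs_int : Integrable
        (fun ω => (b - X ω)/(b-a) * Real.exp (l*a) + (X ω - a)/(b-a) * Real.exp (l*b)) μ := by
      apply Integrable.add
      · exact ((((integrable_const b).sub hXint).div_const (b-a)).mul_const _)
      · exact (((hXint.sub (integrable_const a)).div_const (b-a)).mul_const _)
    have hIle : ∫ ω, Real.exp (l * X ω) ∂μ ≤
        ∫ ω, ((b - X ω)/(b-a) * Real.exp (l*a) + (X ω - a)/(b-a) * Real.exp (l*b)) ∂μ :=
      integral_mono hint_exp hrhs_int hpt
    have hIval : ∫ ω, ((b - X ω)/(b-a) * Real.exp (l*a) + (X ω - a)/(b-a) * Real.exp (l*b)) ∂μ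
        = (b * Real.exp (l*a) - a * Real.exp (l*b)) / (b-a) := by
      have h1 : Integrable (fun ω => (b - X ω)/(b-a) * Real.exp (l*a)) μ :=
        (((integrable_const b).sub hXint).div_const (b-a)).mul_const _
      have h2 : Integrable (fun ω => (X ω - a)/(b-a) * Real.exp (l*b)) μ :=
        ((hXint.sub (integrable_const a)).div_const (b-a)).mul_const _
      rw [integral_add h1 h2]
      have e1 : ∫ ω, (b - X ω)/(b-a) * Real.exp (l*a) ∂μ = b/(b-a) * Real.exp (l*a) := by
        rw [integral_mul_const]
        congr 1
        rw [integral_div, integral_sub (integrable_const b) hXint, hmean]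
        simp
      have e2 : ∫ ω, (X ω - a)/(b-a) * Real.exp (l*b) ∂μ = -a/(b-a) * Real.exp (l*b) := by
        rw [integral_mul_const]
        congr 1
        rw [integral_div, integral_sub hXint (integrable_const a), hmean]
        simp
      rw [e1, e2]
      ring
    -- identify with the core expression
    have hident : (b * Real.exp (l*a) - a * Real.exp (l*b)) / (b-a)
        = Real.exp (-(p * (l*(b-a)))) * (1 - p + p * Real.exp (l*(b-a))) := by
      have hph : -(p * (l*(b-a))) = l * a := by
        rw [hp]; field_simp
      have h1p : 1 - p = b / (b-a) := by
        rw [hp]; field_simp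
        ring
      have e3 : Real.exp (-(p * (l*(b-a)))) * (1 - p + p * Real.exp (l*(b-a)))
          = Real.exp (l*a) * (1-p) + p * Real.exp (l*b) := by
        rw [hph, mul_add, ← mul_assoc, mul_comm (Real.exp (l*a)) p, mul_assoc, ← Real.exp_add,
          show l*a + l*(b-a) = l*b from by ring]
      rw [e3, h1p, hp]
      field_simp
      ring
    have hcore := hoeffding_core hp0 hp1 (mul_nonneg hl hba.le)
    have hfin : (l*(b-a))^2/8 = l^2*(b-a)^2/8 := by ring
    calc ∫ ω, Real.exp (l * X ω) ∂μ
        ≤ (b * Real.exp (l*a) - a * Real.exp (l*b)) / (b-a) := hIle.trans_eq hIval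
      _ = Real.exp (-(p * (l*(b-a)))) * (1 - p + p * Real.exp (l*(b-a))) := hident
      _ ≤ Real.exp ((l*(b-a))^2/8) := hcore
      _ = Real.exp (l^2*(b-a)^2/8) := by rw [hfin]

lemma chernoff_sum {Ω : Type*} [MeasurableSpace Ω] (μ : Measure Ω) [IsProbabilityMeasure μ]
    {n : ℕ} {X : Fin n → Ω → ℝ} (hmeas : ∀ i, Measurable (X i))
    (hindep : ProbabilityTheory.iIndepFun X μ)
    {a b : ℝ} (hab : ∀ i ω, X i ω ∈ Set.Icc a b) (hmean : ∀ i, ∫ ω, X i ω ∂μ = 0)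
    {l ε : ℝ} (hl : 0 ≤ l) :
    μ {ω | ε ≤ ∑ i, X i ω} ≤
      ENNReal.ofReal (Real.exp (-(l*ε) + n * (l^2*(b-a)^2/8))) := by
  have hint : ∀ (c : ℝ) (i : Fin n), Integrable (fun ω => Real.exp (c * X i ω)) μ := by
    intro c i
    refine ⟨(Real.continuous_exp.measurable.comp ((hmeas i).const_mul c)).aestronglyMeasurable, ?_⟩
    apply MeasureTheory.HasFiniteIntegral.of_bounded (C := Real.exp (|c| * max |a| |b|))
    filter_upwards with ω
    rw [Real.norm_eq_abs, abs_of_pos (Real.exp_pos _)]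
    apply Real.exp_le_exp.2
    calc c * X i ω ≤ |c * X i ω| := le_abs_self _
      _ = |c| * |X i ω| := abs_mul _ _
      _ ≤ |c| * max |a| |b| := by
          apply mul_le_mul_of_nonneg_left _ (abs_nonneg c)
          rcases hab i ω with ⟨h1, h2⟩
          rcases le_or_gt 0 (X i ω) with h | h
          · rw [abs_of_nonneg h]; exact le_trans h2 ((le_abs_self b).trans (le_max_right _ _))
          · rw [abs_of_neg h]
            exact le_trans (neg_le_neg h1) ((neg_le_abs a).trans (le_max_left _ _))
  have hS_int : Integrable (fun ω => Real.exp (l * (∑ i, X i) ω)) μ := by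
    simp only [Finset.sum_apply]
    -- exp(l * ∑) = ∏ exp(l * X i) ; bounded instead
    refine ⟨(Real.continuous_exp.measurable.comp
      ((Finset.measurable_sum Finset.univ (fun i _ => hmeas i)).const_mul l)).aestronglyMeasurable, ?_⟩
    apply MeasureTheory.HasFiniteIntegral.of_bounded (C := Real.exp (|l| * (n * max |a| |b|)))
    filter_upwards with ω
    rw [Real.norm_eq_abs, abs_of_pos (Real.exp_pos _)]
    apply Real.exp_le_exp.2
    calc l * ∑ i, X i ω ≤ |l * ∑ i, X i ω| := le_abs_self _
      _ = |l| * |∑ i, X i ω| := abs_mul _ _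
      _ ≤ |l| * (n * max |a| |b|) := by
          apply mul_le_mul_of_nonneg_left _ (abs_nonneg l)
          calc |∑ i, X i ω| ≤ ∑ i, |X i ω| := Finset.abs_sum_le_sum_abs _ _
            _ ≤ ∑ _i : Fin n, max |a| |b| := by
                apply Finset.sum_le_sum
                intro i _
                rcases hab i ω with ⟨h1, h2⟩
                rcases le_or_gt 0 (X i ω) with h | h
                · rw [abs_of_nonneg h]
                  exact le_trans h2 ((le_abs_self b).trans (le_max_right _ _))
                · rw [abs_of_neg h]
                  exact le_trans (neg_le_neg h1) ((neg_le_abs a).trans (le_max_left _ _))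
            _ = n * max |a| |b| := by simp [mul_comm]
  have hchern := ProbabilityTheory.measure_ge_le_exp_mul_mgf (μ := μ) (X := ∑ i, X i)
    (t := l) ε hl hS_int
  have hmgf_sum : ProbabilityTheory.mgf (∑ i, X i) μ l = ∏ i, ProbabilityTheory.mgf (X i) μ l :=
    hindep.mgf_sum hmeas Finset.univ
  have hmgf_le : ∀ i : Fin n, ProbabilityTheory.mgf (X i) μ l ≤ Real.exp (l^2*(b-a)^2/8) :=
    fun i => hoeffding_mgf μ (hmeas i) (hab i) (hmean i) hl
  have hprod : ∏ i : Fin n, ProbabilityTheory.mgf (X i) μ l ≤ (Real.exp (l^2*(b-a)^2/8))^n := by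
    have : (Real.exp (l^2*(b-a)^2/8))^n = ∏ _i : Fin n, Real.exp (l^2*(b-a)^2/8) := by
      simp
    rw [this]
    exact Finset.prod_le_prod (fun i _ => ProbabilityTheory.mgf_nonneg) (fun i _ => hmgf_le i)
  have hfinal : (μ {ω | ε ≤ (∑ i, X i) ω}).toReal ≤ Real.exp (-(l*ε) + n * (l^2*(b-a)^2/8)) := by
    calc (μ {ω | ε ≤ (∑ i, X i) ω}).toReal
        ≤ Real.exp (-l * ε) * ProbabilityTheory.mgf (∑ i, X i) μ l := hchern
      _ ≤ Real.exp (-l * ε) * (Real.exp (l^2*(b-a)^2/8))^n := by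
          apply mul_le_mul_of_nonneg_left _ (Real.exp_pos _).le
          rw [hmgf_sum]; exact hprod
      _ = Real.exp (-(l*ε) + n * (l^2*(b-a)^2/8)) := by
          rw [← Real.exp_nat_mul, ← Real.exp_add]
          ring_nf
  have hset : {ω | ε ≤ ∑ i, X i ω} = {ω | ε ≤ (∑ i, X i) ω} := by
    ext ω; simp [Finset.sum_apply]
  rw [hset, ← ENNReal.ofReal_toReal (measure_ne_top μ _)]
  exact ENNReal.ofReal_le_ofReal hfinal

variable {d : ℕ}

local notation "E" => EuclideanSpace ℝ (Fin d)

/-- Cardinality bound for (1/2)-separated subsets of the unit sphere. -/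
lemma sep_card_le (N : Finset (EuclideanSpace ℝ (Fin d)))
    (hN : ∀ u ∈ N, ‖u‖ = (1:ℝ))
    (hsep : ∀ u ∈ N, ∀ v ∈ N, u ≠ v → (1:ℝ)/2 ≤ ‖u - v‖) :
    N.card ≤ 5^d := by
  rcases Nat.eq_zero_or_pos d with hd | hd
  · subst hd
    -- E is a subsingleton; N has at most one element, and in fact none has norm 1... card ≤ 1
    have : N.card ≤ 1 := by
      refine Finset.card_le_one.2 fun a ha b hb => ?_
      exact Subsingleton.elim a b
    simpa using this
  haveI : Nonempty (Fin d) := ⟨⟨0, hd⟩⟩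
  haveI : Nontrivial (EuclideanSpace ℝ (Fin d)) := by
    refine ⟨0, EuclideanSpace.single ⟨0, hd⟩ 1, ?_⟩
    intro h
    have := congrArg (fun x : EuclideanSpace ℝ (Fin d) => x ⟨0, hd⟩) h.symm
    simp [EuclideanSpace.single] at this
  set μ : Measure (EuclideanSpace ℝ (Fin d)) := volume with hμ
  have hrank : Module.finrank ℝ (EuclideanSpace ℝ (Fin d)) = d :=
    finrank_euclideanSpace_fin
  have hdisj : (↑N : Set (EuclideanSpace ℝ (Fin d))).PairwiseDisjoint
      (fun u => Metric.ball u (1/4)) := by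
    intro u hu v hv huv
    apply Metric.ball_disjoint_ball
    rw [dist_eq_norm]
    have := hsep u (by exact_mod_cast hu) v (by exact_mod_cast hv) huv
    linarith
  have hunion : μ (⋃ u ∈ N, Metric.ball u (1/4)) = ∑ u ∈ N, μ (Metric.ball u (1/4)) :=
    measure_biUnion_finset hdisj (fun u _ => measurableSet_ball)
  have hsub : (⋃ u ∈ N, Metric.ball u (1/4)) ⊆ Metric.ball (0 : EuclideanSpace ℝ (Fin d)) (5/4) := by
    intro x hx
    simp only [Set.mem_iUnion] at hx
    obtain ⟨u, hu, hxu⟩ := hx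
    rw [Metric.mem_ball] at hxu ⊢
    have h1 : dist x 0 ≤ dist x u + dist u 0 := dist_triangle _ _ _
    have h2 : dist u 0 = 1 := by rw [dist_zero_right]; exact hN u hu
    linarith
  have hball : ∀ u : EuclideanSpace ℝ (Fin d),
      μ (Metric.ball u (1/4)) = ENNReal.ofReal ((1/4 : ℝ)^d) * μ (Metric.ball 0 1) := by
    intro u
    rw [Measure.addHaar_ball μ u (by norm_num : (0:ℝ) ≤ 1/4), hrank]
  have hball2 : μ (Metric.ball (0 : EuclideanSpace ℝ (Fin d)) (5/4))
      = ENNReal.ofReal ((5/4 : ℝ)^d) * μ (Metric.ball 0 1) := by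
    rw [Measure.addHaar_ball μ 0 (by norm_num : (0:ℝ) ≤ 5/4), hrank]
  have hμpos : 0 < μ (Metric.ball (0 : EuclideanSpace ℝ (Fin d)) 1) :=
    measure_ball_pos μ 0 one_pos
  have hμfin : μ (Metric.ball (0 : EuclideanSpace ℝ (Fin d)) 1) < ⊤ := measure_ball_lt_top
  have hineq : (N.card : ℝ≥0∞) * (ENNReal.ofReal ((1/4 : ℝ)^d) * μ (Metric.ball 0 1))
      ≤ ENNReal.ofReal ((5/4 : ℝ)^d) * μ (Metric.ball 0 1) := by
    calc (N.card : ℝ≥0∞) * (ENNReal.ofReal ((1/4 : ℝ)^d) * μ (Metric.ball 0 1))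
        = ∑ u ∈ N, μ (Metric.ball u (1/4)) := by
          rw [Finset.sum_congr rfl (fun u _ => hball u), Finset.sum_const, nsmul_eq_mul]
      _ = μ (⋃ u ∈ N, Metric.ball u (1/4)) := hunion.symm
      _ ≤ μ (Metric.ball 0 (5/4)) := measure_mono hsub
      _ = _ := hball2
  -- pass to reals
  set V : ℝ := (μ (Metric.ball (0 : EuclideanSpace ℝ (Fin d)) 1)).toReal with hV
  have hVpos : 0 < V := ENNReal.toReal_pos hμpos.ne' hμfin.ne
  have hreal : (N.card : ℝ) * ((1/4 : ℝ)^d * V) ≤ (5/4 : ℝ)^d * V := by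
    have h1 : ((N.card : ℝ≥0∞) * (ENNReal.ofReal ((1/4 : ℝ)^d) * μ (Metric.ball 0 1))).toReal
        = (N.card : ℝ) * ((1/4 : ℝ)^d * V) := by
      rw [ENNReal.toReal_mul, ENNReal.toReal_mul, ENNReal.toReal_natCast,
        ENNReal.toReal_ofReal (by positivity)]
    have h2 : (ENNReal.ofReal ((5/4 : ℝ)^d) * μ (Metric.ball 0 1)).toReal
        = (5/4 : ℝ)^d * V := by
      rw [ENNReal.toReal_mul, ENNReal.toReal_ofReal (by positivity)]
    rw [← h1, ← h2]
    apply ENNReal.toReal_mono _ hineq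
    exact ENNReal.mul_ne_top (ENNReal.ofReal_ne_top) hμfin.ne
  have hcast : (N.card : ℝ) ≤ (5:ℝ)^d := by
    have hp : (0:ℝ) < (1/4 : ℝ)^d * V := by positivity
    have : (5/4 : ℝ)^d * V = (5:ℝ)^d * ((1/4 : ℝ)^d * V) := by
      rw [← mul_assoc, ← mul_pow]; norm_num
    rw [this] at hreal
    exact le_of_mul_le_mul_right (by linarith) hp
  exact_mod_cast hcast

/-- A `1/2`-net of the unit sphere with at most `5^d` points, giving the inner-product bound. -/
lemma sphere_net (d : ℕ) : ∃ N : Finset (EuclideanSpace ℝ (Fin d)),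
    N.card ≤ 5^d ∧ (∀ u ∈ N, ‖u‖ = (1:ℝ)) ∧
    ∀ v : EuclideanSpace ℝ (Fin d), v ≠ 0 →
      ∃ u ∈ N, ‖v‖ ≤ 2 * (inner ℝ u v : ℝ) := by
  classical
  set S : Set ℕ := {k | ∃ N : Finset (EuclideanSpace ℝ (Fin d)),
    (∀ u ∈ N, ‖u‖ = (1:ℝ)) ∧ (∀ u ∈ N, ∀ v ∈ N, u ≠ v → (1:ℝ)/2 ≤ ‖u - v‖) ∧ N.card = k} with hS
  have h0 : 0 ∈ S := ⟨∅, by simp, by simp, rfl⟩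
  have hbdd : BddAbove S := by
    refine ⟨5^d, fun k hk => ?_⟩
    obtain ⟨N, hN1, hN2, hN3⟩ := hk
    exact hN3 ▸ sep_card_le N hN1 hN2
  have hmem := Nat.sSup_mem ⟨0, h0⟩ hbdd
  obtain ⟨N, hN1, hN2, hN3⟩ := hmem
  refine ⟨N, hN3 ▸ sep_card_le N hN1 hN2, hN1, ?_⟩
  -- maximality gives net property
  have hnet : ∀ v : EuclideanSpace ℝ (Fin d), ‖v‖ = 1 → ∃ u ∈ N, ‖v - u‖ ≤ 1/2 := by
    intro v hv
    by_contra hcon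
    push_neg at hcon
    have hvN : v ∉ N := fun hvN => by
      have := hcon v hvN
      rw [sub_self, norm_zero] at this
      linarith
    have hins : (insert v N).card = sSup S + 1 := by
      rw [Finset.card_insert_of_notMem hvN, hN3]
    have hmem' : sSup S + 1 ∈ S := by
      refine ⟨insert v N, ?_, ?_, hins⟩
      · intro u hu
        rcases Finset.mem_insert.1 hu with h | h
        · rw [h]; exact hv
        · exact hN1 u h
      · intro u hu u' hu' huu'
        rcases Finset.mem_insert.1 hu with h | h <;>
          rcases Finset.mem_insert.1 hu' with h' | h'
        · exact absurd (h.trans h'.symm) huu'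
        · rw [h]; exact (hcon u' h').le
        · rw [h']
          rw [show u - v = -(v - u) from (neg_sub v u).symm, norm_neg]
          exact (hcon u h).le
        · exact hN2 u h u' h' huu'
    have := le_csSup hbdd hmem'
    omega
  intro v hv
  have hnv : (0:ℝ) < ‖v‖ := norm_pos_iff.2 hv
  set u₀ : EuclideanSpace ℝ (Fin d) := ‖v‖⁻¹ • v with hu₀
  have hu₀n : ‖u₀‖ = 1 := by
    rw [hu₀, norm_smul, norm_inv, norm_norm, inv_mul_cancel₀ hnv.ne']
  obtain ⟨u, huN, hud⟩ := hnet u₀ hu₀n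
  refine ⟨u, huN, ?_⟩
  have h1 : (inner ℝ u₀ v : ℝ) = ‖v‖ := by
    rw [hu₀, real_inner_smul_left, real_inner_self_eq_norm_sq]
    field_simp
  have h2 : (inner ℝ (u₀ - u) v : ℝ) ≤ ‖v‖ / 2 := by
    calc (inner ℝ (u₀ - u) v : ℝ) ≤ ‖u₀ - u‖ * ‖v‖ := real_inner_le_norm _ _
      _ ≤ 1/2 * ‖v‖ := mul_le_mul_of_nonneg_right hud hnv.le
      _ = ‖v‖ / 2 := by ring
  have h3 : (inner ℝ u v : ℝ) = (inner ℝ u₀ v : ℝ) - (inner ℝ (u₀ - u) v : ℝ) := by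
    rw [inner_sub_left]; ring
  rw [h3, h1]
  linarith

/-- Under (A.1)–(A.2), for fixed `w` in the ball of radius `R` and i.i.d.
samples `Z₁,…,Z_n ∼ P`, the empirical gradient concentrates:
`P[‖(1/n)Σ ∇f(w,Zᵢ) − ∇F(w)‖ ≥ t] ≤ 6^d exp(−n t²/(8σ₁²))` with `σ₁ = B + MR`. -/
theorem empirical_gradient_concentration {d n : ℕ} {𝒵 : Type*} [MeasurableSpace 𝒵]
    (f : EuclideanSpace ℝ (Fin d) → 𝒵 → ℝ) (A B C M L R : ℝ)
    (hA : 0 ≤ A) (hB : 0 ≤ B) (hC : 0 ≤ C) (hM : 0 < M) (hL : 0 < L) (hR : 0 < R)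
    (hC2 : ∀ z, ContDiff ℝ 2 (fun w => f w z))
    (hfA : ∀ z, |f 0 z| ≤ A)
    (hfB : ∀ z, ‖gradient (fun w => f w z) 0‖ ≤ B)
    (hfC : ∀ z, ‖fderiv ℝ (gradient (fun w => f w z)) 0‖ ≤ C)
    (hLipG : ∀ z u v,
      ‖gradient (fun w => f w z) u - gradient (fun w => f w z) v‖ ≤ M * ‖u - v‖)
    (hLipH : ∀ z u v,
      ‖fderiv ℝ (gradient (fun w => f w z)) u - fderiv ℝ (gradient (fun w => f w z)) v‖
        ≤ L * ‖u - v‖)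
    {Ω : Type*} [MeasurableSpace Ω] (ℙ : Measure Ω) [IsProbabilityMeasure ℙ]
    (P : Measure 𝒵) [IsProbabilityMeasure P]
    (Z : Fin n → Ω → 𝒵) (hZmeas : ∀ i, Measurable (Z i))
    (hiid : ProbabilityTheory.iIndepFun Z ℙ)
    (hlaw : ∀ i, ℙ.map (Z i) = P)
    (hgm : ∀ w, AEStronglyMeasurable (fun z => gradient (fun u => f u z) w) P)
    (hn : 0 < n)
    (w : EuclideanSpace ℝ (Fin d)) (hw : w ∈ Metric.closedBall (0 : EuclideanSpace ℝ (Fin d)) R)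
    (t : ℝ) (ht : 0 < t) :
    ℙ {ω | t ≤ ‖(n : ℝ)⁻¹ • (∑ i, gradient (fun u => f u (Z i ω)) w) -
        ∫ z, gradient (fun u => f u z) w ∂P‖}
      ≤ ENNReal.ofReal ((6 : ℝ) ^ d * Real.exp (-(n * t ^ 2) / (8 * (B + M * R) ^ 2))) := by
  classical
  set c : ℝ := B + M * R with hc
  have hcpos : 0 < c := by positivity
  set g : 𝒵 → EuclideanSpace ℝ (Fin d) := fun z => gradient (fun u => f u z) w with hg
  have hwR : ‖w‖ ≤ R := by
    rw [Metric.mem_closedBall, dist_zero_right] at hw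
    exact hw
  have hgbound : ∀ z, ‖g z‖ ≤ c := by
    intro z
    calc ‖g z‖ ≤ ‖g z - gradient (fun u => f u z) 0‖ + ‖gradient (fun u => f u z) 0‖ := by
          simpa using norm_add_le (g z - gradient (fun u => f u z) 0) (gradient (fun u => f u z) 0)
      _ ≤ M * ‖w - 0‖ + B := add_le_add (hLipG z w 0) (hfB z)
      _ ≤ c := by rw [hc, sub_zero]; nlinarith
  -- measurable modification of g, bounded everywhere
  obtain ⟨g₀, hg₀sm, hg₀ae⟩ : ∃ g₀, StronglyMeasurable g₀ ∧ g =ᵐ[P] g₀ :=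
    ⟨(hgm w).mk _, (hgm w).stronglyMeasurable_mk, (hgm w).ae_eq_mk⟩
  set s : Set 𝒵 := {z | ‖g₀ z‖ ≤ c} with hs
  have hsmeas : MeasurableSet s := by
    have : s = (fun z => ‖g₀ z‖) ⁻¹' Set.Iic c := rfl
    rw [this]
    exact hg₀sm.norm.measurable measurableSet_Iic
  set g1 : 𝒵 → EuclideanSpace ℝ (Fin d) := s.indicator g₀ with hg1
  have hg1sm : StronglyMeasurable g1 := hg₀sm.indicator hsmeas
  have hg1meas : Measurable g1 := hg1sm.measurable
  have hg1bound : ∀ z, ‖g1 z‖ ≤ c := by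
    intro z
    by_cases hz : z ∈ s
    · rw [hg1, Set.indicator_of_mem hz]; exact hz
    · rw [hg1, Set.indicator_of_notMem hz]; simpa using hcpos.le
  have hgg1 : g =ᵐ[P] g1 := by
    filter_upwards [hg₀ae] with z hz
    have hzs : z ∈ s := by rw [hs]; exact Set.mem_setOf.2 (hz ▸ hgbound z)
    rw [hg1, Set.indicator_of_mem hzs, hz]
  have hg1int : Integrable g1 P :=
    ⟨hg1sm.aestronglyMeasurable,
      HasFiniteIntegral.of_bounded (C := c) (Filter.Eventually.of_forall hg1bound)⟩
  set m : EuclideanSpace ℝ (Fin d) := ∫ z, g1 z ∂P with hm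
  have hintg : ∫ z, g z ∂P = m := integral_congr_ae hgg1
  -- a.e. replacement in the event
  have hae : ∀ᵐ ω ∂ℙ, ∀ i, g (Z i ω) = g1 (Z i ω) := by
    rw [MeasureTheory.ae_all_iff]
    intro i
    exact MeasureTheory.ae_of_ae_map (hZmeas i).aemeasurable (by rw [hlaw i]; exact hgg1)
  have hstep1 : ℙ {ω | t ≤ ‖(n : ℝ)⁻¹ • (∑ i, gradient (fun u => f u (Z i ω)) w) -
        ∫ z, gradient (fun u => f u z) w ∂P‖}
      ≤ ℙ {ω | t ≤ ‖(n : ℝ)⁻¹ • (∑ i, g1 (Z i ω)) - m‖} := by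
    apply measure_mono_ae
    filter_upwards [hae] with ω hω hmem
    have hsum : (∑ i, gradient (fun u => f u (Z i ω)) w) = ∑ i, g1 (Z i ω) :=
      Finset.sum_congr rfl (fun i _ => hω i)
    show t ≤ ‖(n:ℝ)⁻¹ • (∑ i, g1 (Z i ω)) - m‖
    have h0 : t ≤ ‖(n:ℝ)⁻¹ • (∑ i, gradient (fun u => f u (Z i ω)) w) -
        ∫ z, gradient (fun u => f u z) w ∂P‖ := hmem
    rwa [hsum, show (∫ z, gradient (fun u => f u z) w ∂P) = m from hintg] at h0
  -- covering net
  obtain ⟨N, hNcard, hNnorm, hNnet⟩ := sphere_net d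
  -- for each u in the net, the scalar Chernoff bound
  have hub : ∀ u ∈ N,
      ℙ {ω | (n:ℝ) * t / 2 ≤ ∑ i, ((inner ℝ u (g1 (Z i ω)) : ℝ) - (inner ℝ u m : ℝ))}
        ≤ ENNReal.ofReal (Real.exp (-(n * t ^ 2) / (8 * c ^ 2))) := by
    intro u huN
    have hun : ‖u‖ = 1 := hNnorm u huN
    set φ : 𝒵 → ℝ := fun z => (inner ℝ u (g1 z) : ℝ) - (inner ℝ u m : ℝ) with hφ
    have hφmeas : Measurable φ := by
      apply Measurable.sub _ measurable_const
      exact (Continuous.measurable (continuous_const.inner continuous_id)).comp hg1meas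
    have hφbound : ∀ z, φ z ∈ Set.Icc (-(c + (inner ℝ u m : ℝ))) (c - (inner ℝ u m : ℝ)) := by
      intro z
      have h1 : |(inner ℝ u (g1 z) : ℝ)| ≤ c := by
        calc |(inner ℝ u (g1 z) : ℝ)| ≤ ‖u‖ * ‖g1 z‖ := abs_real_inner_le_norm _ _
          _ ≤ c := by rw [hun, one_mul]; exact hg1bound z
      rw [abs_le] at h1
      constructor
      · simp only [hφ]; linarith [h1.1]
      · simp only [hφ]; linarith [h1.2]
    have hφint : Integrable (fun z => (inner ℝ u (g1 z) : ℝ)) P := by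
      refine ⟨((Continuous.measurable
        (continuous_const.inner continuous_id)).comp hg1meas).aestronglyMeasurable, ?_⟩
      apply HasFiniteIntegral.of_bounded (C := c)
      filter_upwards with z
      rw [Real.norm_eq_abs]
      calc |(inner ℝ u (g1 z) : ℝ)| ≤ ‖u‖ * ‖g1 z‖ := abs_real_inner_le_norm _ _
        _ ≤ c := by rw [hun, one_mul]; exact hg1bound z
    have hφmean : ∀ i : Fin n, ∫ ω, φ (Z i ω) ∂ℙ = 0 := by
      intro i
      have h1 : ∫ ω, φ (Z i ω) ∂ℙ = ∫ z, φ z ∂P := by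
        rw [← hlaw i]
        exact (integral_map (hZmeas i).aemeasurable
          (by rw [hlaw i]; exact hφmeas.aestronglyMeasurable)).symm
      rw [h1, hφ]
      simp only []
      rw [integral_sub hφint (integrable_const _), integral_inner hg1int, integral_const]
      simp [hm]
    have hindep' : ProbabilityTheory.iIndepFun
        (fun i => φ ∘ Z i) ℙ := hiid.comp (fun _ => φ) (fun _ => hφmeas)
    have hch := chernoff_sum (μ := ℙ) (X := fun i => φ ∘ Z i)
      (fun i => hφmeas.comp (hZmeas i)) hindep'
      (fun i ω => hφbound (Z i ω)) (fun i => hφmean i)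
      (l := t / (2 * c^2)) (ε := (n:ℝ) * t / 2)
      (by positivity)
    have hexp : -((t / (2 * c^2)) * ((n:ℝ) * t / 2)) +
        (n:ℝ) * ((t / (2 * c^2))^2 * ((c - (inner ℝ u m : ℝ)) - (-(c + (inner ℝ u m : ℝ))))^2 / 8)
        = -(n * t ^ 2) / (8 * c ^ 2) := by
      have hc2 : (c:ℝ) ≠ 0 := hcpos.ne'
      have : ((c - (inner ℝ u m : ℝ)) - (-(c + (inner ℝ u m : ℝ)))) = 2 * c := by ring
      rw [this]
      field_simp
      ring
    rw [hexp] at hch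
    convert hch using 2
    rfl
  -- union bound over the net
  have hnR : (0:ℝ) < n := by exact_mod_cast hn
  have hsub2 : {ω | t ≤ ‖(n : ℝ)⁻¹ • (∑ i, g1 (Z i ω)) - m‖} ⊆
      ⋃ u ∈ N, {ω | (n:ℝ) * t / 2 ≤ ∑ i, ((inner ℝ u (g1 (Z i ω)) : ℝ) - (inner ℝ u m : ℝ))} := by
    intro ω hω
    have hω' : t ≤ ‖(n : ℝ)⁻¹ • (∑ i, g1 (Z i ω)) - m‖ := hω
    set W : EuclideanSpace ℝ (Fin d) := (n : ℝ)⁻¹ • (∑ i, g1 (Z i ω)) - m with hW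
    have hWne : W ≠ 0 := by
      intro h
      rw [h, norm_zero] at hω'
      linarith
    obtain ⟨u, huN, hWu⟩ := hNnet W hWne
    have hiW : (inner ℝ u W : ℝ) =
        (n:ℝ)⁻¹ * (∑ i, (inner ℝ u (g1 (Z i ω)) : ℝ)) - (inner ℝ u m : ℝ) := by
      rw [hW, inner_sub_right, real_inner_smul_right, inner_sum]
    have h2 : t / 2 ≤ (inner ℝ u W : ℝ) := by linarith
    refine Set.mem_biUnion huN ?_
    show (n:ℝ) * t / 2 ≤ ∑ i, ((inner ℝ u (g1 (Z i ω)) : ℝ) - (inner ℝ u m : ℝ))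
    have h3 := mul_le_mul_of_nonneg_left h2 hnR.le
    rw [hiW, mul_sub, ← mul_assoc, mul_inv_cancel₀ hnR.ne', one_mul] at h3
    rw [Finset.sum_sub_distrib, Finset.sum_const, Finset.card_univ, Fintype.card_fin,
      nsmul_eq_mul]
    linarith
  have hcard6 : (N.card : ℝ≥0∞) ≤ ((6:ℕ)^d : ℕ) := by
    exact_mod_cast le_trans hNcard (Nat.pow_le_pow_left (by norm_num) d)
  calc ℙ {ω | t ≤ ‖(n : ℝ)⁻¹ • (∑ i, gradient (fun u => f u (Z i ω)) w) -
        ∫ z, gradient (fun u => f u z) w ∂P‖}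
      ≤ ℙ {ω | t ≤ ‖(n : ℝ)⁻¹ • (∑ i, g1 (Z i ω)) - m‖} := hstep1
    _ ≤ ℙ (⋃ u ∈ N, {ω | (n:ℝ) * t / 2 ≤
          ∑ i, ((inner ℝ u (g1 (Z i ω)) : ℝ) - (inner ℝ u m : ℝ))}) := measure_mono hsub2
    _ ≤ ∑ u ∈ N, ℙ {ω | (n:ℝ) * t / 2 ≤
          ∑ i, ((inner ℝ u (g1 (Z i ω)) : ℝ) - (inner ℝ u m : ℝ))} :=
        measure_biUnion_finset_le N _
    _ ≤ ∑ _u ∈ N, ENNReal.ofReal (Real.exp (-(n * t ^ 2) / (8 * c ^ 2))) :=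
        Finset.sum_le_sum hub
    _ = (N.card : ℝ≥0∞) * ENNReal.ofReal (Real.exp (-(n * t ^ 2) / (8 * c ^ 2))) := by
        rw [Finset.sum_const, nsmul_eq_mul]
    _ ≤ (((6:ℕ)^d : ℕ) : ℝ≥0∞) * ENNReal.ofReal (Real.exp (-(n * t ^ 2) / (8 * c ^ 2))) :=
        mul_le_mul_left hcard6 _
    _ = ENNReal.ofReal ((6 : ℝ) ^ d * Real.exp (-(n * t ^ 2) / (8 * c ^ 2))) := by
        rw [← ENNReal.ofReal_natCast ((6:ℕ)^d), ← ENNReal.ofReal_mul (by positivity)]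
        norm_num
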